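/- arXiv:2008.00887 — 3 statements merged into one kernel-verified Lean document; each statement's English description precedes it below -/
import Mathlib

section
/- Let α ≠ 0 be an integer and φ solve the ODE ∂_y²φ − α²φ = f on the half line y ≥ 0 with φ(0) = 0 and φ decaying at infinity. Then there is a constant C independent of α such that α² ‖φ‖_∞ + |α| ‖∂_y φ‖_∞ + ‖∂_y² φ‖_∞ ≤ C ‖f‖_∞, where ‖·‖_∞ is the supremum norm on [0,∞). -/
open Filter Set

/-- One-sided maximum principle: a solution of `φ'' - k φ = f` on the half line with
`φ 0 = 0` and decay at infinity satisfies `φ ≤ M / k` where `M` bounds `|f|`. -/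
lemma half_line_upper_bound {k M : ℝ} (hk : 0 < k) {φ f : ℝ → ℝ}
    (hφ : ContDiff ℝ 2 φ)
    (hM : ∀ y : ℝ, 0 ≤ y → |f y| ≤ M)
    (hode : ∀ y : ℝ, 0 ≤ y → deriv (deriv φ) y - k * φ y = f y)
    (h0 : φ 0 = 0) (hlim : Tendsto φ atTop (nhds 0)) :
    ∀ y : ℝ, 0 ≤ y → φ y ≤ M / k := by
  have hM0 : 0 ≤ M := (abs_nonneg _).trans (hM 0 le_rfl)
  by_contra hcon
  push_neg at hcon
  obtain ⟨y0, hy0, hc⟩ := hcon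
  set c := φ y0 with hcdef
  have hc0 : 0 < c := lt_of_le_of_lt (div_nonneg hM0 hk.le) hc
  -- eventually φ < c
  have hev : ∀ᶠ t in atTop, φ t < c := hlim.eventually_lt_const hc0
  obtain ⟨R0, hR0⟩ := eventually_atTop.mp hev
  set R := max R0 y0 with hRdef
  have hR0le : R0 ≤ R := le_max_left _ _
  have hy0R : y0 ≤ R := le_max_right _ _
  have hRnn : 0 ≤ R := hy0.trans hy0R
  -- maximum on [0, R]
  obtain ⟨z, hzmem, hzmax⟩ := isCompact_Icc.exists_isMaxOn (s := Icc (0:ℝ) R)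
    (Set.nonempty_Icc.mpr hRnn) hφ.continuous.continuousOn
  have hzc : c ≤ φ z := hzmax ⟨hy0, hy0R⟩
  -- global max
  have hglob : ∀ t : ℝ, 0 ≤ t → φ t ≤ φ z := by
    intro t ht
    rcases le_or_gt t R with h | h
    · exact hzmax ⟨ht, h⟩
    · have : φ t < c := hR0 t (hR0le.trans h.le)
      linarith
  have hz0 : 0 < z := by
    rcases hzmem.1.lt_or_eq with h | h
    · exact h
    · exfalso; rw [← h, h0] at hzc; linarith
  -- local max, so deriv φ z = 0
  have hloc : IsLocalMax φ z :=
    Filter.eventually_of_mem (Ioi_mem_nhds hz0) fun t ht => hglob t (le_of_lt ht)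
  have hd0 : deriv φ z = 0 := hloc.deriv_eq_zero
  -- continuity of deriv φ
  have hφ1 : Continuous (deriv φ) := hφ.continuous_deriv one_le_two
  -- choose c' with M/k < c' < c
  set c' := (M / k + c) / 2 with hc'def
  have hc'1 : M / k < c' := by simp only [hc'def]; linarith
  have hc'2 : c' < c := by simp only [hc'def]; linarith
  have hkc' : 0 < k * c' - M := by
    have := (div_lt_iff₀ hk).mp hc'1
    nlinarith
  -- neighborhood where φ > c'
  have hUopen : IsOpen (φ ⁻¹' Ioi c') := isOpen_Ioi.preimage hφ.continuous
  have hzU : z ∈ φ ⁻¹' Ioi c' := by simp only [mem_preimage, mem_Ioi]; linarith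
  obtain ⟨δ, hδ0, hδ⟩ := Metric.isOpen_iff.mp hUopen z hzU
  set d := δ / 2 with hddef
  have hd0' : 0 < d := by positivity
  have hsub : Icc z (z + d) ⊆ φ ⁻¹' Ioi c' := by
    intro t ht
    apply hδ
    rw [Metric.mem_ball, Real.dist_eq, abs_of_nonneg (by linarith [ht.1])]
    linarith [ht.2]
  -- deriv (deriv φ) > 0 on [z, z+d]
  have hdd : ∀ t ∈ Icc z (z + d), 0 < deriv (deriv φ) t := by
    intro t ht
    have htnn : 0 ≤ t := le_trans hz0.le ht.1
    have hft := hM t htnn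
    have hφt : c' < φ t := hsub ht
    have := hode t htnn
    have : deriv (deriv φ) t = k * φ t + f t := by linarith
    rw [this]
    have : -M ≤ f t := (abs_le.mp hft).1
    nlinarith
  -- deriv φ strictly increasing on [z, z+d]
  have hmono1 : StrictMonoOn (deriv φ) (Icc z (z + d)) :=
    strictMonoOn_of_deriv_pos (convex_Icc _ _) hφ1.continuousOn
      (fun t ht => hdd t (interior_subset ht))
  have hdpos : ∀ t ∈ Ioo z (z + d), 0 < deriv φ t := by
    intro t ht
    have := hmono1 (left_mem_Icc.mpr (by linarith)) ⟨ht.1.le, ht.2.le⟩ ht.1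
    rw [hd0] at this
    exact this
  -- φ strictly increasing on [z, z+d]
  have hmono2 : StrictMonoOn φ (Icc z (z + d)) :=
    strictMonoOn_of_deriv_pos (convex_Icc _ _) hφ.continuous.continuousOn
      (fun t ht => by rw [interior_Icc] at ht; exact hdpos t ht)
  have : φ z < φ (z + d) :=
    hmono2 (left_mem_Icc.mpr (by linarith)) (right_mem_Icc.mpr (by linarith)) (by linarith)
  have : φ (z + d) ≤ φ z := hglob _ (by linarith)
  linarith

/-- Two-sided bound from the maximum principle. -/
lemma half_line_abs_bound {k M : ℝ} (hk : 0 < k) {φ f : ℝ → ℝ}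
    (hφ : ContDiff ℝ 2 φ)
    (hM : ∀ y : ℝ, 0 ≤ y → |f y| ≤ M)
    (hode : ∀ y : ℝ, 0 ≤ y → deriv (deriv φ) y - k * φ y = f y)
    (h0 : φ 0 = 0) (hlim : Tendsto φ atTop (nhds 0)) :
    ∀ y : ℝ, 0 ≤ y → |φ y| ≤ M / k := by
  intro y hy
  have h1 := half_line_upper_bound hk hφ hM hode h0 hlim y hy
  have hderiv_neg : deriv (fun x => -φ x) = fun x => -deriv φ x := funext fun x => deriv.neg
  have h2 := half_line_upper_bound hk (φ := fun x => -φ x) (f := fun x => -f x) hφ.neg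
    (fun t ht => by simpa using hM t ht)
    (fun t ht => by
      have h := hode t ht
      have e2 : deriv (deriv fun x => -φ x) t = -deriv (deriv φ) t := by
        rw [hderiv_neg]; exact deriv.neg
      simp only [e2]; linarith)
    (by simp [h0])
    (by simpa using hlim.neg) y hy
  exact abs_le.mpr ⟨by linarith, h1⟩

/-- Elliptic estimate for `∂_y²φ - α²φ = f` on the half line with `φ(0) = 0` and decay
at infinity: there is a constant `C` independent of the integer `α ≠ 0` such that
`α² ‖φ‖_∞ + |α| ‖∂_y φ‖_∞ + ‖∂_y² φ‖_∞ ≤ C ‖f‖_∞` (stated pointwise on `[0,∞)`). -/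
theorem laplace_half_line_sup_estimate :
    ∃ C : ℝ, 0 < C ∧ ∀ α : ℤ, α ≠ 0 → ∀ (φ f : ℝ → ℝ) (M : ℝ),
      ContDiff ℝ 2 φ → Continuous f →
      (∀ y : ℝ, 0 ≤ y → |f y| ≤ M) →
      (∀ y : ℝ, 0 ≤ y → deriv (deriv φ) y - (α : ℝ) ^ 2 * φ y = f y) →
      φ 0 = 0 → Filter.Tendsto φ Filter.atTop (nhds 0) →
      ∀ y : ℝ, 0 ≤ y →
        (α : ℝ) ^ 2 * |φ y| + |(α : ℝ)| * |deriv φ y| + |deriv (deriv φ) y| ≤ C * M := by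
  refine ⟨7, by norm_num, ?_⟩
  intro α hα φ f M hφ hf hM hode h0 hlim y hy
  have hα0 : (α : ℝ) ≠ 0 := Int.cast_ne_zero.mpr hα
  set a := |(α : ℝ)| with hadef
  have ha0 : 0 < a := abs_pos.mpr hα0
  have ha1 : (1 : ℝ) ≤ a := by
    have := Int.one_le_abs hα
    calc (1:ℝ) ≤ |α| := by exact_mod_cast this
    _ = a := by push_cast; rfl
  have hksq : (α : ℝ) ^ 2 = a ^ 2 := (sq_abs _).symm
  have hk : 0 < (α : ℝ) ^ 2 := by positivity
  have hM0 : 0 ≤ M := (abs_nonneg _).trans (hM 0 le_rfl)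
  -- sup bound on φ
  have habs : ∀ t : ℝ, 0 ≤ t → |φ t| ≤ M / (α : ℝ) ^ 2 :=
    half_line_abs_bound hk hφ hM hode h0 hlim
  -- bound on φ''
  have hd2 : ∀ t : ℝ, 0 ≤ t → |deriv (deriv φ) t| ≤ 2 * M := by
    intro t ht
    have he : deriv (deriv φ) t = (α : ℝ) ^ 2 * φ t + f t := by linarith [hode t ht]
    rw [he]
    have h1 : |(α : ℝ) ^ 2 * φ t| ≤ M := by
      rw [abs_mul, abs_of_nonneg hk.le]
      calc (α : ℝ) ^ 2 * |φ t| ≤ (α : ℝ) ^ 2 * (M / (α : ℝ) ^ 2) := by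
            exact mul_le_mul_of_nonneg_left (habs t ht) hk.le
        _ = M := by
            rw [show (α:ℝ)^2 * (M / (α:ℝ)^2) = ((α:ℝ)^2/(α:ℝ)^2) * M from by ring,
              div_self hk.ne', one_mul]
    calc |(α : ℝ) ^ 2 * φ t + f t| ≤ |(α : ℝ) ^ 2 * φ t| + |f t| := abs_add_le _ _
      _ ≤ M + M := add_le_add h1 (hM t ht)
      _ = 2 * M := by ring
  -- bound on φ' via interpolation on [y, y + 1/a]
  have hdφ : Differentiable ℝ φ := hφ.differentiable two_ne_zero
  have hφ1 : ContDiff ℝ 1 (deriv φ) := by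
    have h2 : ContDiff ℝ ((1 : ℕ) + 1) φ := by exact_mod_cast hφ
    exact (contDiff_succ_iff_deriv.mp h2).2.2
  have hd1diff : Differentiable ℝ (deriv φ) := hφ1.differentiable one_ne_zero
  set s : Set ℝ := Icc y (y + 1 / a) with hsdef
  have hainv : 0 < 1 / a := by positivity
  have hys : y ∈ s := left_mem_Icc.mpr (by linarith)
  have hy2s : y + 1 / a ∈ s := right_mem_Icc.mpr (by linarith)
  -- Lipschitz bound for deriv φ on s
  have hstepA : ∀ t ∈ s, |deriv φ t - deriv φ y| ≤ 2 * M * (1 / a) := by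
    intro t ht
    have hb : ‖deriv φ t - deriv φ y‖ ≤ (2 * M) * ‖t - y‖ :=
      (convex_Icc _ _).norm_image_sub_le_of_norm_hasDerivWithin_le
        (f' := deriv (deriv φ))
        (fun x _ => ((hd1diff x).hasDerivAt).hasDerivWithinAt)
        (fun x hx => by
          have : 0 ≤ x := le_trans hy hx.1
          simpa [Real.norm_eq_abs] using hd2 x this)
        hys ht
    have htd : ‖t - y‖ ≤ 1 / a := by
      rw [Real.norm_eq_abs, abs_of_nonneg (by linarith [ht.1])]
      linarith [ht.2]
    calc |deriv φ t - deriv φ y| ≤ (2 * M) * ‖t - y‖ := hb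
      _ ≤ 2 * M * (1 / a) := by
          apply mul_le_mul_of_nonneg_left htd (by positivity)
  -- Taylor-type bound
  set g : ℝ → ℝ := fun t => φ t - (t - y) * deriv φ y with hgdef
  have hgB : ‖g (y + 1 / a) - g y‖ ≤ (2 * M * (1 / a)) * ‖(y + 1 / a) - y‖ := by
    apply (convex_Icc _ _).norm_image_sub_le_of_norm_hasDerivWithin_le
      (f' := fun t => deriv φ t - deriv φ y)
      (fun x _ => ?_) (fun x hx => by simpa [Real.norm_eq_abs] using hstepA x hx) hys hy2s
    have h1 : HasDerivAt (fun t => (t - y) * deriv φ y) (deriv φ y) x := by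
      simpa using ((hasDerivAt_id x).sub_const y).mul_const (deriv φ y)
    exact (((hdφ x).hasDerivAt).sub h1).hasDerivWithinAt
  have hgy : g y = φ y := by simp [hgdef]
  have hgy2 : g (y + 1 / a) = φ (y + 1 / a) - (1 / a) * deriv φ y := by
    simp [hgdef]
  have hnorm : ‖(y + 1 / a) - y‖ = 1 / a := by
    rw [Real.norm_eq_abs]; rw [show y + 1 / a - y = 1 / a by ring]
    exact abs_of_pos (by positivity)
  rw [hgy, hgy2, hnorm, Real.norm_eq_abs] at hgB
  -- extract bound on |deriv φ y|
  have hφy : |φ y| ≤ M / a ^ 2 := by rw [← hksq]; exact habs y hy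
  have hφy2 : |φ (y + 1 / a)| ≤ M / a ^ 2 := by
    rw [← hksq]; exact habs (y + 1 / a) (by positivity)
  have key : (1 / a) * |deriv φ y| ≤ 2 * M / a ^ 2 + 2 * M / a ^ 2 := by
    set D : ℝ := φ (y + 1 / a) - (1 / a) * deriv φ y - φ y with hDdef
    have h2 : |D| ≤ 2 * M * (1 / a) * (1 / a) := hgB
    have h1 : (1 / a) * |deriv φ y| ≤ |φ (y + 1 / a)| + |φ y| + |D| := by
      have h3 : (1 / a) * |deriv φ y| = |(1 / a) * deriv φ y| := by
        rw [abs_mul, abs_of_pos hainv]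
      rw [h3, show (1 / a) * deriv φ y = (φ (y + 1 / a) - φ y) - D from by
        rw [hDdef]; ring]
      calc |(φ (y + 1 / a) - φ y) - D| ≤ |φ (y + 1 / a) - φ y| + |D| := abs_sub _ _
        _ ≤ (|φ (y + 1 / a)| + |φ y|) + |D| := by gcongr; exact abs_sub _ _
        _ = _ := by ring
    have h4 : 2 * M * (1 / a) * (1 / a) = 2 * M / a ^ 2 := by
      rw [show 2 * M * (1 / a) * (1 / a) = 2 * M * (1 / a ^ 2) from by ring, mul_one_div]
    have h5 : M / a ^ 2 + M / a ^ 2 ≤ 2 * M / a ^ 2 :=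
      le_of_eq (by rw [← add_div]; ring_nf)
    calc (1 / a) * |deriv φ y| ≤ M / a ^ 2 + M / a ^ 2 + 2 * M * (1 / a) * (1 / a) := by
          linarith [h1, hφy, hφy2, h2]
      _ ≤ 2 * M / a ^ 2 + 2 * M / a ^ 2 := by rw [h4]; linarith [h5]
  have hderiv_bound : a * |deriv φ y| ≤ 4 * M := by
    have := mul_le_mul_of_nonneg_left key (by positivity : (0:ℝ) ≤ a ^ 2)
    have e1 : a ^ 2 * ((1 / a) * |deriv φ y|) = a * |deriv φ y| := by
      rw [show a ^ 2 * ((1 / a) * |deriv φ y|) = (a / a) * (a * |deriv φ y|) from by ring,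
        div_self ha0.ne', one_mul]
    have e2 : a ^ 2 * (2 * M / a ^ 2 + 2 * M / a ^ 2) = 4 * M := by
      rw [show a ^ 2 * (2 * M / a ^ 2 + 2 * M / a ^ 2) = (a ^ 2 / a ^ 2) * (4 * M) from by ring,
        div_self (pow_ne_zero 2 ha0.ne'), one_mul]
    rw [e1, e2] at this
    exact this
  -- combine
  have b1 : (α : ℝ) ^ 2 * |φ y| ≤ M := by
    calc (α : ℝ) ^ 2 * |φ y| ≤ (α : ℝ) ^ 2 * (M / (α : ℝ) ^ 2) :=
          mul_le_mul_of_nonneg_left (habs y hy) hk.le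
      _ = M := by
          rw [show (α:ℝ)^2 * (M / (α:ℝ)^2) = ((α:ℝ)^2/(α:ℝ)^2) * M from by ring,
            div_self hk.ne', one_mul]
  have b3 : |deriv (deriv φ) y| ≤ 2 * M := hd2 y hy
  have b2 : |(α : ℝ)| * |deriv φ y| ≤ 4 * M := hderiv_bound
  linarith
end

section
/- Let δ > 0, α an integer with δα² ≤ 1, and let φ solve ∂_y²φ − α²φ = f on y ≥ 0 with φ(0) = 0, where ‖f‖_{0,δ} = sup_y |f(y)|(δ^{-1}e^{-y/δ}+1)^{-1} < ∞. Then there is a constant C independent of α and δ such that |α|‖φ‖_∞ + ‖∂_y φ‖_∞ ≤ C‖f‖_{0,δ} and α²‖φ‖_∞ + ‖∂_y²φ‖_{0,δ} ≤ C‖f‖_{0,δ}. -/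
open Real Filter intervalIntegral

lemma integral_exp_mul' (c y Y : ℝ) (hc : c ≠ 0) :
    ∫ t in y..Y, Real.exp (c * t) = (Real.exp (c * Y) - Real.exp (c * y)) / c := by
  have key : ∀ t : ℝ, HasDerivAt (fun s => Real.exp (c * s) / c) (Real.exp (c * t)) t := by
    intro t
    have h1 : HasDerivAt (fun s : ℝ => c * s) c t := by
      simpa using (hasDerivAt_id t).const_mul c
    have h3 := ((Real.hasDerivAt_exp (c * t)).comp t h1).div_const c
    simpa [mul_comm, mul_div_assoc, mul_div_cancel_left₀ _ hc] using h3
  rw [intervalIntegral.integral_eq_sub_of_hasDerivAt (fun t _ => key t)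
    ((Real.continuous_exp.comp (continuous_const.mul continuous_id)).intervalIntegrable y Y)]
  ring

set_option maxHeartbeats 1000000 in
/-- Boundary layer elliptic estimate: if `δ > 0`, `δα² ≤ 1`, and `φ` solves
`∂_y²φ - α²φ = f` on `y ≥ 0` with `φ(0) = 0`, decay at infinity, and
`|f(y)| ≤ M (δ⁻¹ e^{-y/δ} + 1)` (i.e. `‖f‖_{0,δ} ≤ M`), then with a constant `C`
independent of `α` and `δ`:
`|α| ‖φ‖_∞ + ‖∂_y φ‖_∞ ≤ C M` and `α² ‖φ‖_∞ + ‖∂_y² φ‖_{0,δ} ≤ C M`. -/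
theorem laplace_half_line_boundary_layer_estimate :
    ∃ C : ℝ, 0 < C ∧ ∀ δ : ℝ, 0 < δ → ∀ α : ℤ, α ≠ 0 → δ * (α : ℝ) ^ 2 ≤ 1 →
      ∀ (φ f : ℝ → ℝ) (M : ℝ),
      ContDiff ℝ 2 φ → Continuous f →
      (∀ y : ℝ, 0 ≤ y → |f y| ≤ M * (δ⁻¹ * Real.exp (-y / δ) + 1)) →
      (∀ y : ℝ, 0 ≤ y → deriv (deriv φ) y - (α : ℝ) ^ 2 * φ y = f y) →
      φ 0 = 0 → Filter.Tendsto φ Filter.atTop (nhds 0) →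
      ∀ y : ℝ, 0 ≤ y →
        |(α : ℝ)| * |φ y| + |deriv φ y| ≤ C * M ∧
        (α : ℝ) ^ 2 * |φ y| +
          |deriv (deriv φ) y| * (δ⁻¹ * Real.exp (-y / δ) + 1)⁻¹ ≤ C * M := by
  refine ⟨10, by norm_num, ?_⟩
  intro δ hδ α hα hδα φ f M hφ hfc hfM hode hφ0 hφtop
  set a : ℝ := |(α : ℝ)| with ha_def
  have ha1 : (1 : ℝ) ≤ a := by
    have : (1 : ℤ) ≤ |α| := Int.one_le_abs hα
    calc (1:ℝ) ≤ |(α:ℤ)| := by exact_mod_cast this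
    _ = a := by push_cast [ha_def]; ring
  have ha0 : 0 < a := lt_of_lt_of_le one_pos ha1
  have ha2 : a ^ 2 = (α : ℝ) ^ 2 := sq_abs _
  have hM : 0 ≤ M := by
    have h := hfM 0 le_rfl
    have h2 : (0:ℝ) < δ⁻¹ * Real.exp (-(0:ℝ) / δ) + 1 := by positivity
    nlinarith [abs_nonneg (f 0)]
  have hδ2 : δ ≤ 1 / a ^ 2 := by
    rw [ha2]; rw [le_div_iff₀ (by rw [← ha2]; positivity)]
    linarith [hδα]
  -- differentiability facts
  have hφd : Differentiable ℝ φ := hφ.differentiable (by norm_num)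
  have hφ'cd : ContDiff ℝ 1 (deriv φ) := by
    have : ContDiff ℝ ((1:ℕ) + 1) φ := by exact_mod_cast hφ
    exact (contDiff_succ_iff_deriv.mp this).2.2
  have hφ'd : Differentiable ℝ (deriv φ) := hφ'cd.differentiable one_ne_zero
  have hφ'c : Continuous (deriv φ) := hφ'd.continuous
  have hφ''c : Continuous (deriv (deriv φ)) := (contDiff_one_iff_deriv.mp hφ'cd).2
  set ψ : ℝ → ℝ := fun t => deriv φ t + a * φ t with hψ_def
  have hψc : Continuous ψ := hφ'c.add (continuous_const.mul hφd.continuous)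
  -- bound on φ
  obtain ⟨Y₀, hY₀⟩ := (Metric.tendsto_atTop.mp hφtop 1 one_pos)
  obtain ⟨K₀, hK₀⟩ := (isCompact_Icc : IsCompact (Set.Icc (0:ℝ) (max Y₀ 0))).exists_bound_of_continuousOn hφd.continuous.continuousOn
  set K : ℝ := max K₀ 1 with hK_def
  have hK1 : (1:ℝ) ≤ K := le_max_right _ _
  have hKpos : (0:ℝ) < K := lt_of_lt_of_le one_pos hK1
  have hφbd0 : ∀ t : ℝ, 0 ≤ t → |φ t| ≤ K := by
    intro t ht
    rcases le_or_gt t (max Y₀ 0) with h | h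
    · exact le_trans (hK₀ t ⟨ht, h⟩) (le_max_left _ _)
    · have := hY₀ t (le_of_lt (lt_of_le_of_lt (le_max_left Y₀ 0) h))
      rw [Real.dist_eq, sub_zero] at this
      exact le_trans this.le hK1
  -- bound on f
  have hfbd : ∀ t : ℝ, 0 ≤ t → |f t| ≤ M * (δ⁻¹ + 1) := by
    intro t ht
    refine le_trans (hfM t ht) ?_
    have he : Real.exp (-t / δ) ≤ 1 := Real.exp_le_one_iff.mpr (by
      apply div_nonpos_of_nonpos_of_nonneg <;> [linarith; linarith])
    have : δ⁻¹ * Real.exp (-t / δ) ≤ δ⁻¹ * 1 := by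
      apply mul_le_mul_of_nonneg_left he (le_of_lt (inv_pos.mpr hδ))
    nlinarith
  -- bound on φ''
  have hφ''bd : ∀ t : ℝ, 0 ≤ t → |deriv (deriv φ) t| ≤ a ^ 2 * K + M * (δ⁻¹ + 1) := by
    intro t ht
    have h1 := hode t ht
    have : deriv (deriv φ) t = (α:ℝ)^2 * φ t + f t := by linarith
    rw [this, ← ha2]
    calc |a ^ 2 * φ t + f t| ≤ a^2 * |φ t| + |f t| := by
          refine le_trans (abs_add_le _ _) ?_
          rw [abs_mul, abs_of_nonneg (by positivity : (0:ℝ) ≤ a^2)]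
    _ ≤ a ^ 2 * K + M * (δ⁻¹ + 1) := by
          have := hφbd0 t ht; have := hfbd t ht; nlinarith [sq_nonneg a]
  set B2 : ℝ := a ^ 2 * K + M * (δ⁻¹ + 1) with hB2_def
  have hB2pos : 0 ≤ B2 := le_trans (abs_nonneg _) (hφ''bd 0 le_rfl)
  -- bound on φ'
  have hφ'bd : ∀ t : ℝ, 0 ≤ t → |deriv φ t| ≤ 2 * K + B2 := by
    intro t ht
    have hder : ∀ s ∈ Set.uIcc t (t+1), HasDerivAt (fun s => φ s + (t + 1 - s) * deriv φ s)
        ((t + 1 - s) * deriv (deriv φ) s) s := by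
      intro s _
      have h1 : HasDerivAt (fun s : ℝ => t + 1 - s) (-1) s := by
        simpa using (hasDerivAt_id s).const_sub (t+1)
      have h2 := h1.mul (hφ'd s).hasDerivAt
      have h3 := (hφd s).hasDerivAt.add h2
      exact h3.congr_deriv (by ring)
    have hInt : IntervalIntegrable (fun s => (t + 1 - s) * deriv (deriv φ) s) MeasureTheory.volume t (t+1) :=
      ((continuous_const.sub continuous_id).mul hφ''c).intervalIntegrable _ _
    have hFTC := intervalIntegral.integral_eq_sub_of_hasDerivAt hder hInt
    have hIb : |∫ s in t..(t+1), (t + 1 - s) * deriv (deriv φ) s| ≤ B2 := by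
      have h := intervalIntegral.norm_integral_le_of_norm_le_const (a := t) (b := t+1)
        (C := B2) (f := fun s => (t + 1 - s) * deriv (deriv φ) s) ?_
      · have h2 : |(t+1 : ℝ) - t| = 1 := by norm_num
        rw [h2, mul_one] at h
        exact h
      · intro x hx
        rw [Set.uIoc_of_le (by linarith)] at hx
        have hx0 : 0 ≤ x := le_trans ht hx.1.le
        have h1 : |t + 1 - x| ≤ 1 := by rw [abs_le]; constructor <;> [linarith [hx.2]; linarith [hx.1]]
        calc ‖(t + 1 - x) * deriv (deriv φ) x‖ = |t + 1 - x| * |deriv (deriv φ) x| := abs_mul _ _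
        _ ≤ 1 * B2 := mul_le_mul h1 (hφ''bd x hx0) (abs_nonneg _) zero_le_one
        _ = B2 := one_mul _
    rw [show t+1-(t+1) = (0:ℝ) by ring] at hFTC
    rw [show t+1-t = (1:ℝ) by ring] at hFTC
    simp only [zero_mul, add_zero, one_mul] at hFTC
    have heq : deriv φ t = (φ (t+1) - φ t) - ∫ s in t..(t+1), (t + 1 - s) * deriv (deriv φ) s := by
      linarith
    rw [heq]
    have hb1 := hφbd0 t ht
    have hb2 := hφbd0 (t+1) (by linarith)
    calc |(φ (t+1) - φ t) - ∫ s in t..(t+1), (t + 1 - s) * deriv (deriv φ) s|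
        ≤ |φ (t+1) - φ t| + |∫ s in t..(t+1), (t + 1 - s) * deriv (deriv φ) s| := abs_sub _ _
    _ ≤ (|φ (t+1)| + |φ t|) + B2 := add_le_add (abs_sub _ _) hIb
    _ ≤ 2 * K + B2 := by nlinarith
  set B : ℝ := 2 * K + B2 with hB_def
  have hBpos : 0 ≤ B := by have := hB2pos; simp only [hB_def]; nlinarith
  -- decay of exp(-(a Y)) ψ Y
  have hgdecay : Tendsto (fun Y => |Real.exp (-(a*Y)) * ψ Y|) atTop (nhds 0) := by
    have h2 : Tendsto (fun Y : ℝ => -(a*Y)) atTop atBot :=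
      tendsto_neg_atTop_atBot.comp (Filter.Tendsto.const_mul_atTop ha0 tendsto_id)
    have h1 : Tendsto (fun Y : ℝ => Real.exp (-(a*Y)) * (B + a*K)) atTop (nhds 0) := by
      have h3 := (Real.tendsto_exp_atBot.comp h2).mul_const (B + a*K)
      simpa using h3
    apply tendsto_of_tendsto_of_tendsto_of_le_of_le' tendsto_const_nhds h1
    · exact Filter.Eventually.of_forall (fun Y => abs_nonneg _)
    · filter_upwards [Filter.eventually_ge_atTop 0] with Y hY
      have hb : |ψ Y| ≤ B + a*K := by
        calc |ψ Y| ≤ |deriv φ Y| + |a * φ Y| := abs_add_le _ _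
        _ ≤ B + a*K := by
            rw [abs_mul, abs_of_nonneg ha0.le]
            exact add_le_add (hφ'bd Y hY) (mul_le_mul_of_nonneg_left (hφbd0 Y hY) ha0.le)
      calc |Real.exp (-(a*Y)) * ψ Y| = Real.exp (-(a*Y)) * |ψ Y| := by
            rw [abs_mul, abs_of_pos (Real.exp_pos _)]
      _ ≤ Real.exp (-(a*Y)) * (B + a*K) := mul_le_mul_of_nonneg_left hb (Real.exp_pos _).le
  -- FTC for exp(-(a t)) ψ t
  have hgFTC : ∀ y, 0 ≤ y → ∀ Y, y ≤ Y →
      Real.exp (-(a*Y)) * ψ Y - Real.exp (-(a*y)) * ψ y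
        = ∫ t in y..Y, Real.exp (-(a*t)) * f t := by
    intro y hy Y hY
    have hder : ∀ t ∈ Set.uIcc y Y, HasDerivAt (fun t => Real.exp (-(a*t)) * ψ t)
        (Real.exp (-(a*t)) * f t) t := by
      intro t htm
      rw [Set.uIcc_of_le hY] at htm
      have ht0 : 0 ≤ t := le_trans hy htm.1
      have h1 : HasDerivAt (fun s : ℝ => -(a*s)) (-a) t := by
        exact ((hasDerivAt_id t).const_mul a).neg.congr_deriv (by simp)
      have h2 := (Real.hasDerivAt_exp (-(a*t))).comp t h1
      have h3 : HasDerivAt ψ (deriv (deriv φ) t + a * deriv φ t) t :=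
        (hφ'd t).hasDerivAt.add ((hφd t).hasDerivAt.const_mul a)
      have h4 := h2.mul h3
      refine h4.congr_deriv ?_
      have h5 : deriv (deriv φ) t = a^2 * φ t + f t := by
        rw [ha2]; linarith [hode t ht0]
      simp only [hψ_def, Function.comp]
      rw [h5]; ring
    have hInt : IntervalIntegrable (fun t => Real.exp (-(a*t)) * f t) MeasureTheory.volume y Y :=
      ((Real.continuous_exp.comp (continuous_const.mul continuous_id).neg).mul hfc).intervalIntegrable _ _
    rw [intervalIntegral.integral_eq_sub_of_hasDerivAt hder hInt]
  set r : ℝ := a + δ⁻¹ with hr_def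
  have hr0 : 0 < r := by have : 0 < δ⁻¹ := inv_pos.mpr hδ; simp only [hr_def]; linarith
  have hδr : δ⁻¹ ≤ r := by simp only [hr_def]; linarith
  -- bound on the integral
  have hIbound : ∀ y, 0 ≤ y → ∀ Y, y ≤ Y →
      |∫ t in y..Y, Real.exp (-(a*t)) * f t|
        ≤ M * Real.exp (-(a*y)) * (Real.exp (-y/δ) + 1/a) := by
    intro y hy Y hY
    have hcr : Continuous (fun t : ℝ => Real.exp (-(r*t))) :=
      Real.continuous_exp.comp (continuous_const.mul continuous_id).neg
    have hca : Continuous (fun t : ℝ => Real.exp (-(a*t))) :=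
      Real.continuous_exp.comp (continuous_const.mul continuous_id).neg
    have hgint : IntervalIntegrable
        (fun t => M * δ⁻¹ * Real.exp (-(r*t)) + M * Real.exp (-(a*t))) MeasureTheory.volume y Y :=
      ((continuous_const.mul hcr).add (continuous_const.mul hca)).intervalIntegrable _ _
    have hptw : ∀ t ∈ Set.uIoc y Y,
        ‖Real.exp (-(a*t)) * f t‖ ≤ M * δ⁻¹ * Real.exp (-(r*t)) + M * Real.exp (-(a*t)) := by
      intro t htm
      rw [Set.uIoc_of_le hY] at htm
      have ht0 : 0 ≤ t := le_trans hy htm.1.le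
      have hsplit : Real.exp (-(r*t)) = Real.exp (-(a*t)) * Real.exp (-t/δ) := by
        rw [← Real.exp_add]; congr 1; simp only [hr_def]; field_simp; ring
      calc ‖Real.exp (-(a*t)) * f t‖ = Real.exp (-(a*t)) * |f t| := by
            rw [Real.norm_eq_abs, abs_mul, abs_of_pos (Real.exp_pos _)]
      _ ≤ Real.exp (-(a*t)) * (M * (δ⁻¹ * Real.exp (-t/δ) + 1)) :=
            mul_le_mul_of_nonneg_left (hfM t ht0) (Real.exp_pos _).le
      _ = M * δ⁻¹ * Real.exp (-(r*t)) + M * Real.exp (-(a*t)) := by rw [hsplit]; ring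
    have hbig := intervalIntegral.norm_integral_le_of_norm_le
      (μ := MeasureTheory.volume) (a := y) (b := Y)
      (f := fun t => Real.exp (-(a*t)) * f t) hY
      (Filter.Eventually.of_forall (fun t ht => hptw t (by rw [Set.uIoc_of_le hY]; exact ht)))
      hgint
    rw [Real.norm_eq_abs] at hbig
    refine le_trans hbig ?_
    -- compute the dominating integral
    have e1 := integral_exp_mul' (-r) y Y (by linarith)
    have e2 := integral_exp_mul' (-a) y Y (by linarith)
    simp only [neg_mul] at e1 e2
    have hval : (∫ t in y..Y, M * δ⁻¹ * Real.exp (-(r*t)) + M * Real.exp (-(a*t)))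
        = M * δ⁻¹ * ((Real.exp (-(r*Y)) - Real.exp (-(r*y)))/(-r))
          + M * ((Real.exp (-(a*Y)) - Real.exp (-(a*y)))/(-a)) := by
      rw [intervalIntegral.integral_add (f := fun t => M * δ⁻¹ * Real.exp (-(r*t)))
          (g := fun t => M * Real.exp (-(a*t)))
          ((continuous_const.mul hcr).intervalIntegrable _ _)
          ((continuous_const.mul hca).intervalIntegrable _ _),
        intervalIntegral.integral_const_mul, intervalIntegral.integral_const_mul, e1, e2]
    rw [hval]
    have hFyY : Real.exp (-(r*Y)) ≤ Real.exp (-(r*y)) :=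
      Real.exp_le_exp.mpr (neg_le_neg (mul_le_mul_of_nonneg_left hY hr0.le))
    have hEyY : Real.exp (-(a*Y)) ≤ Real.exp (-(a*y)) :=
      Real.exp_le_exp.mpr (neg_le_neg (mul_le_mul_of_nonneg_left hY ha0.le))
    have hnn : 0 ≤ M * δ⁻¹ * ((Real.exp (-(r*Y)) - Real.exp (-(r*y)))/(-r))
          + M * ((Real.exp (-(a*Y)) - Real.exp (-(a*y)))/(-a)) := by
      apply add_nonneg
      · apply mul_nonneg (by positivity)
        rw [div_neg, le_neg, neg_zero]
        apply div_nonpos_of_nonpos_of_nonneg (by linarith) hr0.le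
      · apply mul_nonneg hM
        rw [div_neg, le_neg, neg_zero]
        apply div_nonpos_of_nonpos_of_nonneg (by linarith) ha0.le
    have hsplity : Real.exp (-(r*y)) = Real.exp (-(a*y)) * Real.exp (-y/δ) := by
      rw [← Real.exp_add]; congr 1; simp only [hr_def]; field_simp; ring
    have key1 : M * δ⁻¹ * ((Real.exp (-(r*Y)) - Real.exp (-(r*y)))/(-r))
        ≤ M * (Real.exp (-(a*y)) * Real.exp (-y/δ)) := by
      have h1 : (Real.exp (-(r*Y)) - Real.exp (-(r*y)))/(-r)
          = (Real.exp (-(r*y)) - Real.exp (-(r*Y)))/r := by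
        rw [div_neg, ← neg_div, neg_sub]
      rw [h1, ← hsplity]
      calc M * δ⁻¹ * ((Real.exp (-(r*y)) - Real.exp (-(r*Y)))/r)
          ≤ M * δ⁻¹ * (Real.exp (-(r*y))/r) := by
            refine mul_le_mul_of_nonneg_left ?_ (by positivity)
            exact (div_le_div_iff_of_pos_right hr0).mpr (by linarith [Real.exp_pos (-(r*Y))])
      _ = M * (δ⁻¹ * (Real.exp (-(r*y))/r)) := by ring
      _ ≤ M * (r * (Real.exp (-(r*y))/r)) := by
            refine mul_le_mul_of_nonneg_left (mul_le_mul_of_nonneg_right hδr (by positivity)) hM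
      _ = M * Real.exp (-(r*y)) := by field_simp
    have key2 : M * ((Real.exp (-(a*Y)) - Real.exp (-(a*y)))/(-a))
        ≤ M * (Real.exp (-(a*y)) * (1/a)) := by
      have h1 : (Real.exp (-(a*Y)) - Real.exp (-(a*y)))/(-a)
          = (Real.exp (-(a*y)) - Real.exp (-(a*Y)))/a := by
        rw [div_neg, ← neg_div, neg_sub]
      rw [h1]
      calc M * ((Real.exp (-(a*y)) - Real.exp (-(a*Y)))/a)
          ≤ M * (Real.exp (-(a*y))/a) := by
            refine mul_le_mul_of_nonneg_left ?_ hM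
            exact (div_le_div_iff_of_pos_right ha0).mpr (by linarith [Real.exp_pos (-(a*Y))])
      _ = M * (Real.exp (-(a*y)) * (1/a)) := by ring
    calc M * δ⁻¹ * ((Real.exp (-(r*Y)) - Real.exp (-(r*y)))/(-r))
          + M * ((Real.exp (-(a*Y)) - Real.exp (-(a*y)))/(-a))
        ≤ M * (Real.exp (-(a*y)) * Real.exp (-y/δ)) + M * (Real.exp (-(a*y)) * (1/a)) :=
          add_le_add key1 key2
    _ = M * Real.exp (-(a*y)) * (Real.exp (-y/δ) + 1/a) := by ring
  -- pointwise bound on ψ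
  have hψbd : ∀ y, 0 ≤ y → |ψ y| ≤ M * (Real.exp (-y/δ) + 1/a) := by
    intro y hy
    have key : ∀ Y, y ≤ Y →
        |Real.exp (-(a*y)) * ψ y| - M * Real.exp (-(a*y)) * (Real.exp (-y/δ) + 1/a)
          ≤ |Real.exp (-(a*Y)) * ψ Y| := by
      intro Y hY
      have h1 := hgFTC y hy Y hY
      have h2 := hIbound y hy Y hY
      have h3 : Real.exp (-(a*y)) * ψ y
          = Real.exp (-(a*Y)) * ψ Y - ∫ t in y..Y, Real.exp (-(a*t)) * f t := by linarith
      have h4 : |Real.exp (-(a*y)) * ψ y|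
          ≤ |Real.exp (-(a*Y)) * ψ Y| + |∫ t in y..Y, Real.exp (-(a*t)) * f t| := by
        rw [h3]; exact abs_sub _ _
      linarith
    have h0 : |Real.exp (-(a*y)) * ψ y| - M * Real.exp (-(a*y)) * (Real.exp (-y/δ) + 1/a) ≤ 0 :=
      ge_of_tendsto hgdecay (Filter.eventually_atTop.mpr ⟨y, key⟩)
    have h5 : Real.exp (-(a*y)) * |ψ y| ≤ Real.exp (-(a*y)) * (M * (Real.exp (-y/δ) + 1/a)) := by
      rw [abs_mul, abs_of_pos (Real.exp_pos _)] at h0; linarith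
    exact le_of_mul_le_mul_left h5 (Real.exp_pos _)
  -- bound on φ via integrating ψ
  have hφbd : ∀ y, 0 ≤ y → |φ y| ≤ M * δ + M / a^2 := by
    intro y hy
    have hder : ∀ s ∈ Set.uIcc 0 y, HasDerivAt (fun s => Real.exp (a*s) * φ s)
        (Real.exp (a*s) * ψ s) s := by
      intro s _
      have h1 : HasDerivAt (fun u : ℝ => a*u) a s := by
        simpa using (hasDerivAt_id s).const_mul a
      have h2 := (Real.hasDerivAt_exp (a*s)).comp s h1
      have h4 := h2.mul (hφd s).hasDerivAt
      refine h4.congr_deriv ?_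
      simp only [hψ_def, Function.comp]
      ring
    have hce : Continuous (fun s : ℝ => Real.exp (a*s)) :=
      Real.continuous_exp.comp (continuous_const.mul continuous_id)
    have hFTC := intervalIntegral.integral_eq_sub_of_hasDerivAt hder
      ((hce.mul hψc).intervalIntegrable _ _)
    rw [hφ0, mul_zero, sub_zero] at hFTC
    have hcd : Continuous (fun s : ℝ => Real.exp (-(δ⁻¹*s))) :=
      Real.continuous_exp.comp (continuous_const.mul continuous_id).neg
    have hgint : IntervalIntegrable
        (fun s => M * Real.exp (a*y) * Real.exp (-(δ⁻¹*s)) + (M/a) * Real.exp (a*s))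
        MeasureTheory.volume 0 y :=
      ((continuous_const.mul hcd).add (continuous_const.mul hce)).intervalIntegrable _ _
    have hptw : ∀ s ∈ Set.uIoc (0:ℝ) y, ‖Real.exp (a*s) * ψ s‖
        ≤ M * Real.exp (a*y) * Real.exp (-(δ⁻¹*s)) + (M/a) * Real.exp (a*s) := by
      intro s hsm
      rw [Set.uIoc_of_le hy] at hsm
      have hs0 : 0 ≤ s := hsm.1.le
      have hsy : s ≤ y := hsm.2
      have hconv : Real.exp (-s/δ) = Real.exp (-(δ⁻¹*s)) := by
        rw [neg_div, div_eq_mul_inv, mul_comm]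
      calc ‖Real.exp (a*s) * ψ s‖ = Real.exp (a*s) * |ψ s| := by
            rw [Real.norm_eq_abs, abs_mul, abs_of_pos (Real.exp_pos _)]
      _ ≤ Real.exp (a*s) * (M * (Real.exp (-s/δ) + 1/a)) :=
            mul_le_mul_of_nonneg_left (hψbd s hs0) (Real.exp_pos _).le
      _ = M * Real.exp (a*s) * Real.exp (-(δ⁻¹*s)) + (M/a) * Real.exp (a*s) := by
            rw [hconv]; ring
      _ ≤ M * Real.exp (a*y) * Real.exp (-(δ⁻¹*s)) + (M/a) * Real.exp (a*s) := by
            have hss : Real.exp (a*s) ≤ Real.exp (a*y) :=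
              Real.exp_le_exp.mpr (mul_le_mul_of_nonneg_left hsy ha0.le)
            refine add_le_add_left ?_ _
            refine mul_le_mul_of_nonneg_right ?_ (Real.exp_pos _).le
            exact mul_le_mul_of_nonneg_left hss hM
    have hbig := intervalIntegral.norm_integral_le_of_norm_le
      (μ := MeasureTheory.volume) (a := (0:ℝ)) (b := y)
      (f := fun s => Real.exp (a*s) * ψ s) hy
      (Filter.Eventually.of_forall (fun s hs => hptw s (by rw [Set.uIoc_of_le hy]; exact hs)))
      hgint
    rw [Real.norm_eq_abs, hFTC] at hbig
    have hδinv : (0:ℝ) < δ⁻¹ := inv_pos.mpr hδ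
    have e1 := integral_exp_mul' (-δ⁻¹) 0 y (by linarith)
    have e2 := integral_exp_mul' a 0 y ha0.ne'
    simp only [neg_mul] at e1 e2
    have hval : (∫ s in (0:ℝ)..y, M * Real.exp (a*y) * Real.exp (-(δ⁻¹*s)) + (M/a) * Real.exp (a*s))
        = M * Real.exp (a*y) * ((1 - Real.exp (-(δ⁻¹*y))) * δ)
          + (M/a) * ((Real.exp (a*y) - 1)/a) := by
      rw [intervalIntegral.integral_add (f := fun s => M * Real.exp (a*y) * Real.exp (-(δ⁻¹*s)))
          (g := fun s => (M/a) * Real.exp (a*s))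
          ((continuous_const.mul hcd).intervalIntegrable _ _)
          ((continuous_const.mul hce).intervalIntegrable _ _),
        intervalIntegral.integral_const_mul, intervalIntegral.integral_const_mul, e1, e2]
      rw [mul_zero, neg_zero, Real.exp_zero,
        show (Real.exp (-(δ⁻¹*y)) - 1)/(-δ⁻¹) = (1 - Real.exp (-(δ⁻¹*y))) * δ by
          rw [div_neg, ← neg_div, neg_sub, div_eq_mul_inv, inv_inv]]
      rw [mul_zero, Real.exp_zero]
    rw [hval] at hbig
    have hE1 : Real.exp (-(δ⁻¹*y)) ≤ 1 := Real.exp_le_one_iff.mpr (neg_nonpos.mpr (by positivity))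
    have hE0 : (0:ℝ) < Real.exp (-(δ⁻¹*y)) := Real.exp_pos _
    have hey1 : (1:ℝ) ≤ Real.exp (a*y) := by
      have := Real.exp_le_exp.mpr (show (0:ℝ) ≤ a*y by positivity)
      rwa [Real.exp_zero] at this
    have hv0 : 0 ≤ M * Real.exp (a*y) * ((1 - Real.exp (-(δ⁻¹*y))) * δ)
          + (M/a) * ((Real.exp (a*y) - 1)/a) := by
      apply add_nonneg
      · apply mul_nonneg (by positivity)
        apply mul_nonneg (by linarith) hδ.le
      · apply mul_nonneg (by positivity)
        apply div_nonneg (by linarith) ha0.le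
    rw [abs_mul, abs_of_pos (Real.exp_pos _)] at hbig
    have hid : M * Real.exp (a*y) * δ + (M/a) * (Real.exp (a*y)/a)
        = Real.exp (a*y) * (M * δ + M / a^2) := by
      ring
    have hstep : M * Real.exp (a*y) * ((1 - Real.exp (-(δ⁻¹*y))) * δ)
          + (M/a) * ((Real.exp (a*y) - 1)/a)
        ≤ Real.exp (a*y) * (M * δ + M / a^2) := by
      rw [← hid]
      apply add_le_add
      · refine mul_le_mul_of_nonneg_left ?_ (by positivity)
        have h8 : 0 ≤ Real.exp (-(δ⁻¹*y)) * δ := by positivity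
        nlinarith
      · refine mul_le_mul_of_nonneg_left ?_ (by positivity)
        exact (div_le_div_iff_of_pos_right ha0).mpr (by linarith)
    have hfin : Real.exp (a*y) * |φ y| ≤ Real.exp (a*y) * (M * δ + M / a^2) :=
      le_trans hbig hstep
    exact le_of_mul_le_mul_left hfin (Real.exp_pos _)
  -- conclusion
  intro y hy
  have ha2pos : (0:ℝ) < a^2 := by positivity
  have hφy : |φ y| ≤ 2 * M / a^2 := by
    have h0 := hφbd y hy
    have h1 : M * δ ≤ M * (1/a^2) := mul_le_mul_of_nonneg_left hδ2 hM
    have h2 : M * (1/a^2) + M / a^2 = 2*M/a^2 := by ring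
    linarith
  have hsq : a^2 * |φ y| ≤ 2 * M := by
    calc a^2 * |φ y| ≤ a^2 * (2*M/a^2) := mul_le_mul_of_nonneg_left hφy ha2pos.le
    _ = 2*M := by rw [mul_comm, div_mul_cancel₀ _ ha2pos.ne']
  have haφ : a * |φ y| ≤ 2 * M := by
    have h1 : a * |φ y| ≤ a^2 * |φ y| := by
      have h2 : a ≤ a^2 := by nlinarith
      exact mul_le_mul_of_nonneg_right h2 (abs_nonneg _)
    linarith
  have hψy2 : |ψ y| ≤ 2 * M := by
    have he : Real.exp (-y/δ) ≤ 1 := Real.exp_le_one_iff.mpr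
      (div_nonpos_of_nonpos_of_nonneg (by linarith) hδ.le)
    have h1a : 1/a ≤ 1 := by rw [div_le_one ha0]; exact ha1
    calc |ψ y| ≤ M * (Real.exp (-y/δ) + 1/a) := hψbd y hy
    _ ≤ M * 2 := mul_le_mul_of_nonneg_left (by linarith) hM
    _ = 2 * M := by ring
  have hφ' : |deriv φ y| ≤ 4 * M := by
    have hd : deriv φ y = ψ y - a * φ y := by simp only [hψ_def]; ring
    rw [hd]
    calc |ψ y - a*φ y| ≤ |ψ y| + |a*φ y| := abs_sub _ _
    _ = |ψ y| + a * |φ y| := by rw [abs_mul, abs_of_pos ha0]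
    _ ≤ 4*M := by linarith
  constructor
  · have : |(α:ℝ)| * |φ y| = a * |φ y| := rfl
    rw [this]
    linarith
  · have hw1 : 1 ≤ δ⁻¹ * Real.exp (-y/δ) + 1 := by
      have : 0 ≤ δ⁻¹ * Real.exp (-y/δ) := by positivity
      linarith
    have hw0 : (0:ℝ) < δ⁻¹ * Real.exp (-y/δ) + 1 := lt_of_lt_of_le one_pos hw1
    have hwinv1 : (δ⁻¹ * Real.exp (-y/δ) + 1)⁻¹ ≤ 1 := inv_le_one_of_one_le₀ hw1
    have hwinv0 : (0:ℝ) ≤ (δ⁻¹ * Real.exp (-y/δ) + 1)⁻¹ := by positivity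
    have hφ'' : |deriv (deriv φ) y| ≤ 2*M + M*(δ⁻¹ * Real.exp (-y/δ) + 1) := by
      have h5 : deriv (deriv φ) y = (α:ℝ)^2 * φ y + f y := by linarith [hode y hy]
      rw [h5]
      calc |(α:ℝ)^2 * φ y + f y| ≤ |(α:ℝ)^2 * φ y| + |f y| := abs_add_le _ _
      _ = a^2 * |φ y| + |f y| := by rw [abs_mul, abs_of_nonneg (sq_nonneg ((α:ℝ))), ← ha2]
      _ ≤ 2*M + M*(δ⁻¹ * Real.exp (-y/δ) + 1) := add_le_add hsq (hfM y hy)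
    have h6 : |deriv (deriv φ) y| * (δ⁻¹ * Real.exp (-y/δ) + 1)⁻¹
        ≤ (2*M + M*(δ⁻¹ * Real.exp (-y/δ) + 1)) * (δ⁻¹ * Real.exp (-y/δ) + 1)⁻¹ :=
      mul_le_mul_of_nonneg_right hφ'' hwinv0
    have h7 : (2*M + M*(δ⁻¹ * Real.exp (-y/δ) + 1)) * (δ⁻¹ * Real.exp (-y/δ) + 1)⁻¹
        = 2*M*(δ⁻¹ * Real.exp (-y/δ) + 1)⁻¹
          + M*((δ⁻¹ * Real.exp (-y/δ) + 1) * (δ⁻¹ * Real.exp (-y/δ) + 1)⁻¹) := by ring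
    have h8 : (δ⁻¹ * Real.exp (-y/δ) + 1) * (δ⁻¹ * Real.exp (-y/δ) + 1)⁻¹ = 1 :=
      mul_inv_cancel₀ hw0.ne'
    have h9 : 2*M*(δ⁻¹ * Real.exp (-y/δ) + 1)⁻¹ ≤ 2*M := by
      calc 2*M*(δ⁻¹ * Real.exp (-y/δ) + 1)⁻¹ ≤ 2*M*1 :=
        mul_le_mul_of_nonneg_left hwinv1 (by linarith)
      _ = 2*M := mul_one _
    have h10 : (α:ℝ)^2 * |φ y| ≤ 2*M := by rw [← ha2]; exact hsq
    rw [h7, h8] at h6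
    linarith
end

section
/- Suppose nonnegative functions G^n(z₁,z₂), n ≥ 1, defined for small z₁,z₂ ≥ 0, satisfy G^n ≤ (C₀/n) Σ_{j=1}^{n−1} (G^j ∂_{z₁} G^{n−j} + G^j ∂_{z₂} G^{n−j}) for n ≥ 2, with all partial derivatives nonnegative. Then the partial sums G_N(τ,z₁,z₂) = Σ_{n=1}^N G^n(z₁,z₂) τ^{n−1} satisfy, for all τ, z₁, z₂ ≥ 0 and all N ≥ 1, the two-dimensional Hopf differential inequality ∂_τ G_N ≤ C G_N ∂_{z₁} G_N + C G_N ∂_{z₂} G_N for some constant C depending only on C₀. -/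
lemma cauchy_le (g h : ℕ → ℝ) (hg : ∀ n, 0 ≤ g n) (hh : ∀ n, 0 ≤ h n) (N : ℕ) :
    ∑ n ∈ Finset.Icc 2 N, ∑ j ∈ Finset.Ico 1 n, g j * h (n - j) ≤
    (∑ n ∈ Finset.Icc 1 N, g n) * (∑ n ∈ Finset.Icc 1 N, h n) := by
  rw [Finset.sum_sigma']
  have hinj : Set.InjOn (fun x : (_ : ℕ) × ℕ => (x.2, x.1 - x.2))
      ((Finset.Icc 2 N).sigma (fun n => Finset.Ico 1 n)) := by
    intro x hx y hy hxy
    simp only [Finset.mem_coe, Finset.mem_sigma, Finset.mem_Icc, Finset.mem_Ico] at hx hy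
    simp only [Prod.mk.injEq] at hxy
    have : x.1 = y.1 := by omega
    exact Sigma.ext this (by simp [hxy.1])
  calc ∑ x ∈ (Finset.Icc 2 N).sigma (fun n => Finset.Ico 1 n), g x.2 * h (x.1 - x.2)
      = ∑ p ∈ ((Finset.Icc 2 N).sigma (fun n => Finset.Ico 1 n)).image
          (fun x => (x.2, x.1 - x.2)), g p.1 * h p.2 := by
        rw [Finset.sum_image (fun x hx y hy => hinj hx hy)]
    _ ≤ ∑ p ∈ Finset.Icc 1 N ×ˢ Finset.Icc 1 N, g p.1 * h p.2 := by
        apply Finset.sum_le_sum_of_subset_of_nonneg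
        · intro p hp
          simp only [Finset.mem_image, Finset.mem_sigma, Finset.mem_Icc, Finset.mem_Ico] at hp
          obtain ⟨x, ⟨hn, hj⟩, rfl⟩ := hp
          simp only [Finset.mem_product, Finset.mem_Icc]
          omega
        · intro p _ _; exact mul_nonneg (hg _) (hh _)
    _ = _ := by rw [Finset.sum_product]; rw [Finset.sum_mul_sum]


/-- Two-dimensional Hopf differential inequality for the partial sums of generator
functions. If nonnegative functions `G^n(z₁,z₂)` (with nonnegative partial derivatives
`D₁ = ∂_{z₁}G^n`, `D₂ = ∂_{z₂}G^n`) satisfy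
`G^n ≤ (C₀/n) Σ_{j=1}^{n-1} (G^j ∂_{z₁}G^{n-j} + G^j ∂_{z₂}G^{n-j})` for `n ≥ 2`,
then the partial sums `G_N(τ,z₁,z₂) = Σ_{n=1}^N G^n τ^{n-1}` satisfy
`∂_τ G_N ≤ C G_N ∂_{z₁}G_N + C G_N ∂_{z₂}G_N` for all `τ ≥ 0`, `z₁, z₂` in the domain
and all `N ≥ 1`, with `C` depending only on `C₀`. -/
theorem two_dim_hopf_inequality_partial_sums (C₀ r : ℝ) (hC₀ : 0 < C₀) (hr : 0 < r) :
    ∃ C : ℝ, 0 < C ∧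
      ∀ (G D₁ D₂ : ℕ → ℝ → ℝ → ℝ),
      (∀ (n : ℕ) (z₁ z₂ : ℝ), HasDerivAt (fun w => G n w z₂) (D₁ n z₁ z₂) z₁) →
      (∀ (n : ℕ) (z₁ z₂ : ℝ), HasDerivAt (fun w => G n z₁ w) (D₂ n z₁ z₂) z₂) →
      (∀ n, ∀ z₁ ∈ Set.Icc (0:ℝ) r, ∀ z₂ ∈ Set.Icc (0:ℝ) r,
        0 ≤ G n z₁ z₂ ∧ 0 ≤ D₁ n z₁ z₂ ∧ 0 ≤ D₂ n z₁ z₂) →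
      (∀ n : ℕ, 2 ≤ n → ∀ z₁ ∈ Set.Icc (0:ℝ) r, ∀ z₂ ∈ Set.Icc (0:ℝ) r,
        G n z₁ z₂ ≤ (C₀ / n) * ∑ j ∈ Finset.Ico 1 n,
          (G j z₁ z₂ * D₁ (n - j) z₁ z₂ + G j z₁ z₂ * D₂ (n - j) z₁ z₂)) →
      ∀ N, 1 ≤ N → ∀ τ : ℝ, 0 ≤ τ → ∀ z₁ ∈ Set.Icc (0:ℝ) r, ∀ z₂ ∈ Set.Icc (0:ℝ) r,
        deriv (fun s => ∑ n ∈ Finset.Icc 1 N, G n z₁ z₂ * s ^ (n - 1)) τ ≤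
          C * (∑ n ∈ Finset.Icc 1 N, G n z₁ z₂ * τ ^ (n - 1)) *
              (∑ n ∈ Finset.Icc 1 N, D₁ n z₁ z₂ * τ ^ (n - 1)) +
          C * (∑ n ∈ Finset.Icc 1 N, G n z₁ z₂ * τ ^ (n - 1)) *
              (∑ n ∈ Finset.Icc 1 N, D₂ n z₁ z₂ * τ ^ (n - 1)) := by
  refine ⟨C₀, hC₀, ?_⟩
  intro G D₁ D₂ hD₁ hD₂ hnn hrec N hN τ hτ z₁ hz₁ z₂ hz₂
  have hG0 : ∀ n, 0 ≤ G n z₁ z₂ := fun n => (hnn n z₁ hz₁ z₂ hz₂).1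
  have hd1 : ∀ n, 0 ≤ D₁ n z₁ z₂ := fun n => (hnn n z₁ hz₁ z₂ hz₂).2.1
  have hd2 : ∀ n, 0 ≤ D₂ n z₁ z₂ := fun n => (hnn n z₁ hz₁ z₂ hz₂).2.2
  -- compute the derivative
  have hder : HasDerivAt (fun s => ∑ n ∈ Finset.Icc 1 N, G n z₁ z₂ * s ^ (n - 1))
      (∑ n ∈ Finset.Icc 1 N, G n z₁ z₂ * ((n - 1 : ℕ) * τ ^ (n - 1 - 1))) τ :=
    HasDerivAt.fun_sum fun n _ => (hasDerivAt_pow (n - 1) τ).const_mul _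
  rw [hder.deriv]
  -- drop the n = 1 term
  have hdrop : (∑ n ∈ Finset.Icc 1 N, G n z₁ z₂ * ((n - 1 : ℕ) * τ ^ (n - 1 - 1)))
      = ∑ n ∈ Finset.Icc 2 N, G n z₁ z₂ * ((n - 1 : ℕ) * τ ^ (n - 1 - 1)) := by
    refine (Finset.sum_subset (Finset.Icc_subset_Icc_left (by norm_num)) ?_).symm
    intro x hx hx2
    simp only [Finset.mem_Icc] at hx hx2
    have : x = 1 := by omega
    simp [this]
  rw [hdrop]
  have key : ∀ n ∈ Finset.Icc 2 N,
      G n z₁ z₂ * ((n - 1 : ℕ) * τ ^ (n - 1 - 1)) ≤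
      C₀ * ((∑ j ∈ Finset.Ico 1 n, (G j z₁ z₂ * τ ^ (j - 1)) * (D₁ (n - j) z₁ z₂ * τ ^ (n - j - 1)))
          + (∑ j ∈ Finset.Ico 1 n, (G j z₁ z₂ * τ ^ (j - 1)) * (D₂ (n - j) z₁ z₂ * τ ^ (n - j - 1)))) := by
    intro n hn
    simp only [Finset.mem_Icc] at hn
    have hn2 : 2 ≤ n := hn.1
    have hfac : (0:ℝ) ≤ (n - 1 : ℕ) * τ ^ (n - 1 - 1) :=
      mul_nonneg (by positivity) (pow_nonneg hτ _)
    have step1 : G n z₁ z₂ * ((n - 1 : ℕ) * τ ^ (n - 1 - 1)) ≤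
        ((C₀ / n) * ∑ j ∈ Finset.Ico 1 n,
          (G j z₁ z₂ * D₁ (n - j) z₁ z₂ + G j z₁ z₂ * D₂ (n - j) z₁ z₂)) *
          ((n - 1 : ℕ) * τ ^ (n - 1 - 1)) :=
      mul_le_mul_of_nonneg_right (hrec n hn2 z₁ hz₁ z₂ hz₂) hfac
    refine step1.trans ?_
    have hSnn : (0:ℝ) ≤ ∑ j ∈ Finset.Ico 1 n,
        (G j z₁ z₂ * D₁ (n - j) z₁ z₂ + G j z₁ z₂ * D₂ (n - j) z₁ z₂) :=
      Finset.sum_nonneg fun j _ => add_nonneg (mul_nonneg (hG0 _) (hd1 _))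
        (mul_nonneg (hG0 _) (hd2 _))
    have hratio : (C₀ / n) * (n - 1 : ℕ) ≤ C₀ := by
      rw [div_mul_eq_mul_div, div_le_iff₀ (by positivity : (0:ℝ) < (n:ℝ))]
      have : ((n:ℝ) - 1) ≤ (n:ℝ) := by linarith
      have hcast : ((n - 1 : ℕ) : ℝ) = (n:ℝ) - 1 := by
        push_cast [Nat.cast_sub (by omega : 1 ≤ n)]; ring
      nlinarith [hC₀.le]
    have step2 : ((C₀ / n) * ∑ j ∈ Finset.Ico 1 n,
          (G j z₁ z₂ * D₁ (n - j) z₁ z₂ + G j z₁ z₂ * D₂ (n - j) z₁ z₂)) *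
          ((n - 1 : ℕ) * τ ^ (n - 1 - 1)) ≤
        C₀ * (τ ^ (n - 1 - 1) * ∑ j ∈ Finset.Ico 1 n,
          (G j z₁ z₂ * D₁ (n - j) z₁ z₂ + G j z₁ z₂ * D₂ (n - j) z₁ z₂)) := by
      have := mul_le_mul_of_nonneg_right hratio
        (mul_nonneg (pow_nonneg hτ (n-1-1)) hSnn)
      calc ((C₀ / n) * _) * ((n - 1 : ℕ) * τ ^ (n - 1 - 1))
          = ((C₀ / n) * (n - 1 : ℕ)) * (τ ^ (n - 1 - 1) * _) := by ring
        _ ≤ C₀ * (τ ^ (n - 1 - 1) * _) := this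
    refine step2.trans (le_of_eq ?_)
    congr 1
    rw [Finset.mul_sum, ← Finset.sum_add_distrib]
    refine Finset.sum_congr rfl fun j hj => ?_
    simp only [Finset.mem_Ico] at hj
    have hexp : (j - 1) + (n - j - 1) = n - 1 - 1 := by omega
    rw [← hexp, pow_add]
    ring
  calc ∑ n ∈ Finset.Icc 2 N, G n z₁ z₂ * ((n - 1 : ℕ) * τ ^ (n - 1 - 1))
      ≤ ∑ n ∈ Finset.Icc 2 N, C₀ *
        ((∑ j ∈ Finset.Ico 1 n, (G j z₁ z₂ * τ ^ (j - 1)) * (D₁ (n - j) z₁ z₂ * τ ^ (n - j - 1)))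
        + (∑ j ∈ Finset.Ico 1 n, (G j z₁ z₂ * τ ^ (j - 1)) * (D₂ (n - j) z₁ z₂ * τ ^ (n - j - 1)))) :=
        Finset.sum_le_sum key
    _ = C₀ * (∑ n ∈ Finset.Icc 2 N, ∑ j ∈ Finset.Ico 1 n,
          (G j z₁ z₂ * τ ^ (j - 1)) * (D₁ (n - j) z₁ z₂ * τ ^ (n - j - 1)))
        + C₀ * (∑ n ∈ Finset.Icc 2 N, ∑ j ∈ Finset.Ico 1 n,
          (G j z₁ z₂ * τ ^ (j - 1)) * (D₂ (n - j) z₁ z₂ * τ ^ (n - j - 1))) := by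
        simp only [mul_add, Finset.sum_add_distrib, ← Finset.mul_sum]
    _ ≤ C₀ * ((∑ n ∈ Finset.Icc 1 N, G n z₁ z₂ * τ ^ (n - 1)) *
              (∑ n ∈ Finset.Icc 1 N, D₁ n z₁ z₂ * τ ^ (n - 1)))
        + C₀ * ((∑ n ∈ Finset.Icc 1 N, G n z₁ z₂ * τ ^ (n - 1)) *
              (∑ n ∈ Finset.Icc 1 N, D₂ n z₁ z₂ * τ ^ (n - 1))) := by
        refine add_le_add (mul_le_mul_of_nonneg_left ?_ hC₀.le)
          (mul_le_mul_of_nonneg_left ?_ hC₀.le)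
        · exact cauchy_le (fun j => G j z₁ z₂ * τ ^ (j - 1))
            (fun j => D₁ j z₁ z₂ * τ ^ (j - 1))
            (fun j => mul_nonneg (hG0 _) (pow_nonneg hτ _))
            (fun j => mul_nonneg (hd1 _) (pow_nonneg hτ _)) N
        · exact cauchy_le (fun j => G j z₁ z₂ * τ ^ (j - 1))
            (fun j => D₂ j z₁ z₂ * τ ^ (j - 1))
            (fun j => mul_nonneg (hG0 _) (pow_nonneg hτ _))
            (fun j => mul_nonneg (hd2 _) (pow_nonneg hτ _)) N
    _ = _ := by ring
end
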